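/- Let G be a finite simple graph on a vertex set V without isolated vertices and let 𝓛 be its normalized Laplacian, a symmetric linear endomorphism of the space of functions V → ℂ. Suppose S ⊆ V is a Λ-set for some Λ > 0, i.e., ∑_{v∈V}|φ(v)|² ≤ Λ²·∑_{v∈V}|(𝓛φ)(v)|² for every φ : V → ℂ supported in S. If 0 ≤ ω < 1/Λ and f, g ∈ PW_ω(G) agree at every vertex of V \ S, then f = g; that is, V \ S is a uniqueness set for the Paley–Wiener space PW_ω(G). -/

import Mathlib

/-- The normalized Laplacian of a finite simple graph as a linear endomorphism of `V → ℂ`: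
`(𝓛 f) v = f v − ∑_{u ∼ v} f u / √(d u · d v)`. -/
noncomputable def nLapL {V : Type*} [Fintype V] (G : SimpleGraph V) [DecidableRel G.Adj] :
    (V → ℂ) →ₗ[ℂ] (V → ℂ) where
  toFun f := fun v =>
    f v - ∑ u ∈ G.neighborFinset v, f u / (Real.sqrt ((G.degree u : ℝ) * (G.degree v : ℝ)) : ℂ)
  map_add' f g := by
    funext v
    simp only [Pi.add_apply, add_div, Finset.sum_add_distrib]
    ring
  map_smul' a f := by
    funext v
    simp only [Pi.smul_apply, smul_eq_mul, RingHom.id_apply, mul_sub, Finset.mul_sum,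
      mul_div_assoc]

/-- The Paley–Wiener space `PW_ω(G)`: the span (supremum) of the eigenspaces of the normalized
Laplacian corresponding to (real) eigenvalues `μ ≤ ω`. -/
noncomputable def PW {V : Type*} [Fintype V] (G : SimpleGraph V) [DecidableRel G.Adj] (ω : ℝ) :
    Submodule ℂ (V → ℂ) :=
  ⨆ μ : ℝ, ⨆ _ : μ ≤ ω, Module.End.eigenspace (nLapL G) (μ : ℂ)

section aux
variable {V : Type*} [Fintype V] (G : SimpleGraph V) [DecidableRel G.Adj]

lemma nLapL_apply (x : V → ℂ) (v : V) :
    nLapL G x v = x v - ∑ u ∈ G.neighborFinset v,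
      x u / (Real.sqrt ((G.degree u : ℝ) * (G.degree v : ℝ)) : ℂ) := rfl

lemma sum_nbr_swap {M : Type*} [AddCommMonoid M] (F : V → V → M) :
    ∑ v, ∑ u ∈ G.neighborFinset v, F u v = ∑ v, ∑ u ∈ G.neighborFinset v, F v u := by
  have h : ∀ (F : V → V → M), (∑ v, ∑ u ∈ G.neighborFinset v, F u v)
      = ∑ v, ∑ u, if G.Adj v u then F u v else 0 := by
    intro F
    refine Finset.sum_congr rfl fun v _ => ?_
    rw [SimpleGraph.neighborFinset_eq_filter, Finset.sum_filter]
  rw [h F, h (fun a b => F b a), Finset.sum_comm]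
  refine Finset.sum_congr rfl fun a _ => Finset.sum_congr rfl fun b _ => ?_
  exact if_congr (G.adj_comm b a) rfl rfl

lemma conj_nLap_mul (x y : V → ℂ) :
    ∑ v, (starRingEnd ℂ) (nLapL G x v) * y v
      = (∑ v, (starRingEnd ℂ) (x v) * y v)
        - ∑ v, ∑ u ∈ G.neighborFinset v,
            (starRingEnd ℂ) (x u) * y v / (Real.sqrt ((G.degree u : ℝ) * (G.degree v : ℝ)) : ℂ) := by
  rw [← Finset.sum_sub_distrib]
  refine Finset.sum_congr rfl fun v _ => ?_
  rw [nLapL_apply, map_sub, map_sum, sub_mul, Finset.sum_mul]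
  congr 1
  refine Finset.sum_congr rfl fun u _ => ?_
  rw [map_div₀, Complex.conj_ofReal, div_mul_eq_mul_div]

lemma mul_nLap (x y : V → ℂ) :
    ∑ v, (starRingEnd ℂ) (x v) * nLapL G y v
      = (∑ v, (starRingEnd ℂ) (x v) * y v)
        - ∑ v, ∑ u ∈ G.neighborFinset v,
            (starRingEnd ℂ) (x v) * y u / (Real.sqrt ((G.degree u : ℝ) * (G.degree v : ℝ)) : ℂ) := by
  rw [← Finset.sum_sub_distrib]
  refine Finset.sum_congr rfl fun v _ => ?_
  rw [nLapL_apply, mul_sub, Finset.mul_sum]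
  congr 1
  refine Finset.sum_congr rfl fun u _ => ?_
  rw [mul_div_assoc]

lemma nLap_sym_sum (x y : V → ℂ) :
    ∑ v, (starRingEnd ℂ) (nLapL G x v) * y v = ∑ v, (starRingEnd ℂ) (x v) * nLapL G y v := by
  rw [conj_nLap_mul, mul_nLap]
  congr 1
  rw [sum_nbr_swap G (fun u v => (starRingEnd ℂ) (x u) * y v
      / (Real.sqrt ((G.degree u : ℝ) * (G.degree v : ℝ)) : ℂ))]
  refine Finset.sum_congr rfl fun v _ => Finset.sum_congr rfl fun u _ => ?_
  rw [mul_comm ((G.degree v : ℝ))]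

noncomputable def TL : EuclideanSpace ℂ V →ₗ[ℂ] EuclideanSpace ℂ V :=
  (WithLp.linearEquiv 2 ℂ (V → ℂ)).symm.toLinearMap ∘ₗ nLapL G ∘ₗ
    (WithLp.linearEquiv 2 ℂ (V → ℂ)).toLinearMap

lemma TL_apply (x : EuclideanSpace ℂ V) (v : V) :
    TL G x v = nLapL G ((WithLp.linearEquiv 2 ℂ (V → ℂ)) x) v := rfl

lemma TL_isSymmetric : (TL G).IsSymmetric := by
  intro x y
  simp only [PiLp.inner_apply, RCLike.inner_apply']
  exact nLap_sym_sum G ((WithLp.linearEquiv 2 ℂ (V → ℂ)) x)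
    ((WithLp.linearEquiv 2 ℂ (V → ℂ)) y)

lemma pair_bound {du dv : ℝ} (hdu : 0 < du) (hdv : 0 < dv) (z w : ℂ) :
    ((starRingEnd ℂ) z * w).re / Real.sqrt (du * dv) ≤ (‖z‖ ^ 2 / du + ‖w‖ ^ 2 / dv) / 2 := by
  have hsu : (0:ℝ) < Real.sqrt du := Real.sqrt_pos.mpr hdu
  have hsv : (0:ℝ) < Real.sqrt dv := Real.sqrt_pos.mpr hdv
  have h1 : ((starRingEnd ℂ) z * w).re ≤ ‖z‖ * ‖w‖ := by
    calc ((starRingEnd ℂ) z * w).re ≤ ‖(starRingEnd ℂ) z * w‖ :=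
          Complex.re_le_norm _
      _ = ‖z‖ * ‖w‖ := by
          rw [norm_mul, Complex.norm_conj]
  calc ((starRingEnd ℂ) z * w).re / Real.sqrt (du * dv)
      ≤ (‖z‖ * ‖w‖) / Real.sqrt (du * dv) := by
        gcongr
    _ = (‖z‖ / Real.sqrt du) * (‖w‖ / Real.sqrt dv) := by
        rw [Real.sqrt_mul hdu.le, div_mul_div_comm]
    _ ≤ ((‖z‖ / Real.sqrt du) ^ 2 + (‖w‖ / Real.sqrt dv) ^ 2) / 2 := by
        nlinarith [sq_nonneg (‖z‖ / Real.sqrt du - ‖w‖ / Real.sqrt dv)]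
    _ = (‖z‖ ^ 2 / du + ‖w‖ ^ 2 / dv) / 2 := by
        rw [div_pow, div_pow, Real.sq_sqrt hdu.le, Real.sq_sqrt hdv.le]

lemma TL_psd (hdeg : ∀ v : V, 0 < G.degree v) (x : EuclideanSpace ℂ V) :
    0 ≤ (inner ℂ (TL G x) x : ℂ).re := by
  set x' : V → ℂ := (WithLp.linearEquiv 2 ℂ (V → ℂ)) x with hx'
  have h1 : (inner ℂ (TL G x) x : ℂ) = ∑ v, (starRingEnd ℂ) (nLapL G x' v) * x' v := by
    simp only [PiLp.inner_apply, RCLike.inner_apply']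
    rfl
  rw [h1, conj_nLap_mul]
  simp only [Complex.sub_re, Complex.re_sum, Complex.div_ofReal_re]
  have hA : ∀ v, ((starRingEnd ℂ) (x' v) * x' v).re = ‖x' v‖ ^ 2 := by
    intro v
    rw [mul_comm, Complex.mul_conj]
    simp [Complex.normSq_eq_norm_sq, ← Complex.ofReal_pow, Complex.ofReal_re]
  have hsum1 : ∑ v, ((starRingEnd ℂ) (x' v) * x' v).re = ∑ v, ‖x' v‖ ^ 2 :=
    Finset.sum_congr rfl fun v _ => hA v
  set B : V → ℝ := fun v => ‖x' v‖ ^ 2 / (G.degree v : ℝ) with hB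
  have key : ∑ v, ∑ u ∈ G.neighborFinset v,
      ((starRingEnd ℂ) (x' u) * x' v).re / Real.sqrt ((G.degree u : ℝ) * (G.degree v : ℝ))
      ≤ ∑ v, ‖x' v‖ ^ 2 := by
    have hBsum : ∀ (C : V → ℝ), ∑ v, ∑ _u ∈ G.neighborFinset v, C v
        = ∑ v, (G.degree v : ℝ) * C v := by
      intro C
      refine Finset.sum_congr rfl fun v _ => ?_
      rw [Finset.sum_const, G.card_neighborFinset_eq_degree, nsmul_eq_mul]
    calc ∑ v, ∑ u ∈ G.neighborFinset v,
          ((starRingEnd ℂ) (x' u) * x' v).re / Real.sqrt ((G.degree u : ℝ) * (G.degree v : ℝ))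
        ≤ ∑ v, ∑ u ∈ G.neighborFinset v, (B u + B v) / 2 := by
          refine Finset.sum_le_sum fun v _ => Finset.sum_le_sum fun u _ => ?_
          exact pair_bound (by exact_mod_cast hdeg u) (by exact_mod_cast hdeg v) _ _
      _ = ((∑ v, ∑ u ∈ G.neighborFinset v, B u) + ∑ v, ∑ u ∈ G.neighborFinset v, B v) / 2 := by
          rw [← Finset.sum_add_distrib, Finset.sum_div]
          exact Finset.sum_congr rfl fun v _ => by
            rw [← Finset.sum_add_distrib, Finset.sum_div]
      _ = ∑ v, ∑ _u ∈ G.neighborFinset v, B v := by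
          rw [sum_nbr_swap G (fun u _v => B u)]
          ring
      _ = ∑ v, ‖x' v‖ ^ 2 := by
          rw [hBsum]
          refine Finset.sum_congr rfl fun v _ => ?_
          rw [hB]
          have hdv : ((G.degree v : ℝ)) ≠ 0 := by exact_mod_cast (hdeg v).ne'
          field_simp
  linarith [key, hsum1]

end aux

lemma sum_zero_of_contract {s c : ℝ} (h : s ≤ c ^ 2 * s) (hs : 0 ≤ s) (hc : 0 ≤ c)
    (hc1 : c < 1) : s = 0 := by
  have hc2 : c ^ 2 < 1 := by nlinarith
  by_contra hne
  have hspos : 0 < s := lt_of_le_of_ne hs (Ne.symm hne)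
  have hlt : c ^ 2 * s < 1 * s := mul_lt_mul_of_pos_right hc2 hspos
  linarith

/-- If `S` is a `Λ`-set in a finite graph and `0 ≤ ω < 1/Λ`, then `V \ S` is a
uniqueness set for `PW_ω(G)`. -/
theorem compl_lambda_set_uniqueness {V : Type*} [Fintype V] (G : SimpleGraph V)
    [DecidableRel G.Adj] (hdeg : ∀ v : V, 0 < G.degree v)
    (Λ : ℝ) (hΛ : 0 < Λ) (S : Set V)
    (hS : ∀ φ : V → ℂ, (∀ v, v ∉ S → φ v = 0) →
      ∑ v, ‖φ v‖ ^ 2 ≤ Λ ^ 2 * ∑ v, ‖nLapL G φ v‖ ^ 2)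
    (ω : ℝ) (hω0 : 0 ≤ ω) (hω : ω < 1 / Λ)
    (f g : V → ℂ) (hf : f ∈ PW G ω) (hg : g ∈ PW G ω)
    (hagree : ∀ v, v ∉ S → f v = g v) :
    f = g := by
  classical
  set e := WithLp.linearEquiv 2 ℂ (V → ℂ) with he
  set φ : V → ℂ := f - g with hφ
  have hφPW : φ ∈ PW G ω := Submodule.sub_mem _ hf hg
  set x : EuclideanSpace ℂ V := e.symm φ with hxdef
  have hsym := TL_isSymmetric G
  have hn : Module.finrank ℂ (EuclideanSpace ℂ V) = Fintype.card V := finrank_euclideanSpace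
  set b := hsym.eigenvectorBasis hn with hb
  set μ := hsym.eigenvalues hn with hμdef
  -- eigenvalues are nonnegative
  have hμ0 : ∀ i, 0 ≤ μ i := by
    intro i
    have h1 : (inner ℂ (TL G (b i)) (b i) : ℂ) = (μ i : ℂ) := by
      rw [hsym.apply_eigenvectorBasis hn i, inner_smul_left, inner_self_eq_norm_sq_to_K]
      have hbi : ‖b i‖ = 1 := b.orthonormal.1 i
      simp [hbi, Complex.conj_ofReal]
      rfl
    have h2 := TL_psd G hdeg (b i)
    rw [h1] at h2
    simpa using h2
  -- x lies in the span of eigenspaces of TL with eigenvalue ≤ ω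
  set K : Submodule ℂ (EuclideanSpace ℂ V) :=
    ⨆ ν : ℝ, ⨆ _ : ν ≤ ω, Module.End.eigenspace (TL G) (ν : ℂ) with hK
  have hle : ∀ ν : ℂ, Submodule.map e.symm.toLinearMap (Module.End.eigenspace (nLapL G) ν)
      ≤ Module.End.eigenspace (TL G) ν := by
    intro ν
    rw [Submodule.map_le_iff_le_comap]
    intro ψ hψ
    rw [Module.End.mem_eigenspace_iff] at hψ
    rw [Submodule.mem_comap, Module.End.mem_eigenspace_iff]
    have hTLe : TL G (e.symm ψ) = e.symm (nLapL G ψ) := rfl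
    rw [LinearEquiv.coe_coe, hTLe, hψ, map_smul]
  have hxK : x ∈ K := by
    have hmap : Submodule.map e.symm.toLinearMap (PW G ω) ≤ K := by
      rw [PW, Submodule.map_iSup]
      refine iSup_le fun ν => ?_
      rw [Submodule.map_iSup]
      refine iSup_le fun hν => ?_
      exact le_trans (hle (ν : ℂ)) (le_iSup_of_le ν (le_iSup_of_le hν le_rfl))
    exact hmap (Submodule.mem_map_of_mem hφPW)
  -- coefficients of x vanish on eigenvalues exceeding ω
  have horth : ∀ i, ω < μ i → (inner ℂ (b i) x : ℂ) = 0 := by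
    intro i hi
    have hbK : b i ∈ Kᗮ := by
      rw [hK, ← Submodule.iInf_orthogonal]
      refine (Submodule.mem_iInf _).mpr fun ν => ?_
      by_cases hν : ν ≤ ω
      · rw [iSup_pos hν, Submodule.mem_orthogonal]
        intro u hu
        have hne : (ν : ℂ) ≠ ((μ i : ℝ) : ℂ) := by
          intro hcontra
          have hreal : ν = μ i := by exact_mod_cast hcontra
          rw [hreal] at hν
          exact absurd hi (not_lt.mpr hν)
        have hbi : b i ∈ Module.End.eigenspace (TL G) ((μ i : ℝ) : ℂ) :=
          Module.End.mem_eigenspace_iff.mpr (hsym.apply_eigenvectorBasis hn i)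
        exact hsym.orthogonalFamily_eigenspaces hne ⟨u, hu⟩ ⟨b i, hbi⟩
      · rw [iSup_neg hν]
        simp
    exact inner_eq_zero_symm.mp ((Submodule.mem_orthogonal K (b i)).mp hbK x hxK)
  -- Parseval-type norm computations
  have hb2 : ∀ y : EuclideanSpace ℂ V, ‖y‖ ^ 2 = ∑ i, ‖b.repr y i‖ ^ 2 := by
    intro y
    rw [← b.repr.norm_map y, EuclideanSpace.norm_eq, Real.sq_sqrt (by positivity)]
  have hrepr : ∀ i, b.repr (TL G x) i = (μ i : ℂ) * b.repr x i := by
    intro i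
    rw [b.repr_apply_apply, b.repr_apply_apply, ← hsym (b i) x,
      hsym.apply_eigenvectorBasis hn i, inner_smul_left, RCLike.conj_ofReal]
    rfl
  have hbound : ‖TL G x‖ ^ 2 ≤ ω ^ 2 * ‖x‖ ^ 2 := by
    rw [hb2, hb2, Finset.mul_sum]
    refine Finset.sum_le_sum fun i _ => ?_
    rw [hrepr i, norm_mul, mul_pow]
    by_cases hcase : ω < μ i
    · rw [b.repr_apply_apply, horth i hcase]
      simp
    · push_neg at hcase
      have hμω : ‖((μ i : ℝ) : ℂ)‖ ≤ ω := by
        rw [Complex.norm_real, Real.norm_eq_abs, abs_of_nonneg (hμ0 i)]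
        exact hcase
      exact mul_le_mul_of_nonneg_right (pow_le_pow_left₀ (norm_nonneg _) hμω 2)
        (by positivity)
  -- translate back to plain sums
  have hnormx : ∑ v, ‖φ v‖ ^ 2 = ‖x‖ ^ 2 := by
    rw [EuclideanSpace.norm_eq, Real.sq_sqrt (by positivity)]
    rfl
  have hnormTx : ∑ v, ‖nLapL G φ v‖ ^ 2 = ‖TL G x‖ ^ 2 := by
    rw [EuclideanSpace.norm_eq, Real.sq_sqrt (by positivity)]
    rfl
  -- arithmetic finish
  have hsupp : ∀ v, v ∉ S → φ v = 0 := by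
    intro v hv
    rw [hφ, Pi.sub_apply, hagree v hv, sub_self]
  have hineq := hS φ hsupp
  have hchain : ∑ v, ‖φ v‖ ^ 2 ≤ (Λ * ω) ^ 2 * ∑ v, ‖φ v‖ ^ 2 := by
    calc ∑ v, ‖φ v‖ ^ 2 ≤ Λ ^ 2 * ∑ v, ‖nLapL G φ v‖ ^ 2 := hineq
      _ = Λ ^ 2 * ‖TL G x‖ ^ 2 := by rw [hnormTx]
      _ ≤ Λ ^ 2 * (ω ^ 2 * ‖x‖ ^ 2) := by
          exact mul_le_mul_of_nonneg_left hbound (by positivity)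
      _ = (Λ * ω) ^ 2 * ∑ v, ‖φ v‖ ^ 2 := by rw [← hnormx]; ring
  have hΛω : Λ * ω < 1 := by
    have := (lt_div_iff₀ hΛ).mp hω
    linarith [this]
  have hpos : (0:ℝ) ≤ ∑ v, ‖φ v‖ ^ 2 := by positivity
  have hzero : ∑ v, ‖φ v‖ ^ 2 = 0 :=
    sum_zero_of_contract hchain hpos (mul_nonneg hΛ.le hω0) hΛω
  have hφ0 : ∀ v, φ v = 0 := by
    intro v
    have h := (Finset.sum_eq_zero_iff_of_nonneg
      (fun u _ => by positivity)).mp hzero v (Finset.mem_univ v)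
    exact norm_eq_zero.mp (pow_eq_zero_iff two_ne_zero |>.mp h)
  funext v
  have h := hφ0 v
  rw [hφ, Pi.sub_apply, sub_eq_zero] at h
  exact h
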